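/- arXiv:2310.11214 — 5 statements merged into one kernel-verified Lean document; each statement's English description precedes it below -/
import Mathlib

section
/- For every b > 0 and every t ∈ ℝ, the sum over k ∈ ℤ of exp(-(π/b)(t-k)²) is at most √b · θ₃(0, e^{-bπ}), where θ₃(0,q) = Σ_{k∈ℤ} q^{k²}. -/
open Real

lemma summable_gaussian_int (c : ℝ) (hc : 0 < c) :
    Summable fun k : ℤ => Real.exp (-c * (k : ℝ) ^ 2) := by
  rw [summable_int_iff_summable_nat_and_neg]
  have key : Summable fun n : ℕ => Real.exp (-c * (n : ℝ) ^ 2) := by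
    refine Summable.of_nonneg_of_le (f := fun n : ℕ => Real.exp (-c) ^ n)
      (fun n => (Real.exp_pos _).le) ?_ ?_
    · intro n
      rw [← Real.exp_nat_mul]
      apply Real.exp_le_exp.mpr
      have : (n : ℝ) ≤ (n : ℝ) ^ 2 := by
        rcases Nat.eq_zero_or_pos n with h | h
        · simp [h]
        · nlinarith [(Nat.one_le_cast (α := ℝ)).mpr h]
      nlinarith
    · exact summable_geometric_of_lt_one (Real.exp_pos _).le
        (Real.exp_lt_one_iff.mpr (by linarith))
  constructor
  · exact key
  · simpa using key

/-- For every `b > 0` and every `t ∈ ℝ`, the periodization of the Gaussian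
`exp (-(π/b)(t-k)²)` over `k ∈ ℤ` is bounded by `√b · θ₃(0, e^{-bπ})`,
where `θ₃(0,q) = Σ_{k∈ℤ} q^{k²}`. -/
theorem gaussian_periodization_le_sqrt_mul_theta (b : ℝ) (hb : 0 < b) (t : ℝ) :
    ∑' k : ℤ, Real.exp (-(π / b) * (t - (k : ℝ)) ^ 2) ≤
      Real.sqrt b * ∑' k : ℤ, Real.exp (-(b * π) * (k : ℝ) ^ 2) := by
  have hb' : 0 < ((b : ℂ)).re := by simpa using hb
  have key := Complex.tsum_exp_neg_quadratic hb' ((t : ℂ) * Complex.I)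
  -- rewrite the right-hand inner sum of `key` as our real sum
  have hinner : ∀ n : ℤ, Complex.exp (-(π : ℂ) / b * ((n : ℂ) + Complex.I * ((t : ℂ) * Complex.I)) ^ 2)
      = ((Real.exp (-(π / b) * (t - (n : ℝ)) ^ 2) : ℝ) : ℂ) := by
    intro n
    rw [Complex.ofReal_exp]
    congr 1
    have hI : Complex.I * ((t : ℂ) * Complex.I) = -(t : ℂ) := by
      rw [mul_comm, mul_assoc, Complex.I_mul_I, mul_neg_one]
    rw [hI]
    push_cast
    ring
  set S : ℝ := ∑' k : ℤ, Real.exp (-(π / b) * (t - (k : ℝ)) ^ 2) with hS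
  set C : ℂ := ∑' n : ℤ, Complex.exp (-(π : ℂ) * b * (n : ℂ) ^ 2 +
    2 * π * ((t : ℂ) * Complex.I) * (n : ℂ)) with hC
  have hSC : (S : ℂ) = (b : ℂ) ^ (1 / 2 : ℂ) * C := by
    have h1 : ∑' n : ℤ, Complex.exp (-(π : ℂ) / b * ((n : ℂ) + Complex.I * ((t : ℂ) * Complex.I)) ^ 2)
        = (S : ℂ) := by
      rw [hS, Complex.ofReal_tsum]
      exact tsum_congr hinner
    rw [← h1]
    have hne : ((b : ℂ) ^ (1 / 2 : ℂ)) ≠ 0 :=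
      by
        rw [Complex.cpow_def_of_ne_zero (by exact_mod_cast hb.ne')]
        exact Complex.exp_ne_zero _
    rw [key, ← mul_assoc ((b : ℂ) ^ (1 / 2 : ℂ)), mul_one_div, div_self hne, one_mul]
  have hbpow : ‖((b : ℂ) ^ (1 / 2 : ℂ))‖ = Real.sqrt b := by
    have h2 : ((b ^ ((1 : ℝ) / 2) : ℝ) : ℂ) = (b : ℂ) ^ ((((1 : ℝ) / 2 : ℝ)) : ℂ) :=
      Complex.ofReal_cpow hb.le _
    rw [show ((1 : ℂ) / 2) = (((1 : ℝ) / 2 : ℝ) : ℂ) by norm_num, ← h2]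
    rw [Complex.norm_real, Real.norm_eq_abs, abs_of_nonneg (Real.rpow_nonneg hb.le _),
      Real.sqrt_eq_rpow]
  have hnorm : ∀ n : ℤ, ‖Complex.exp (-(π : ℂ) * b * (n : ℂ) ^ 2 +
      2 * π * ((t : ℂ) * Complex.I) * (n : ℂ))‖ = Real.exp (-(b * π) * (n : ℝ) ^ 2) := by
    intro n
    have : -(π : ℂ) * b * (n : ℂ) ^ 2 + 2 * π * ((t : ℂ) * Complex.I) * (n : ℂ)
        = ((-(b * π) * (n : ℝ) ^ 2 : ℝ) : ℂ) + ((2 * π * t * n : ℝ) : ℂ) * Complex.I := by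
      push_cast
      ring
    rw [this, Complex.norm_exp, Complex.add_re, Complex.ofReal_re]
    simp [Complex.mul_re, Complex.I_re, Complex.I_im]
  have hsummable : Summable fun n : ℤ => ‖Complex.exp (-(π : ℂ) * b * (n : ℂ) ^ 2 +
      2 * π * ((t : ℂ) * Complex.I) * (n : ℂ))‖ := by
    simp_rw [hnorm]
    exact summable_gaussian_int (b * π) (by positivity)
  have hSnn : 0 ≤ S := tsum_nonneg fun k => (Real.exp_pos _).le
  calc S = ‖(S : ℂ)‖ := by rw [Complex.norm_real, Real.norm_eq_abs, abs_of_nonneg hSnn]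
    _ = ‖((b : ℂ) ^ (1 / 2 : ℂ))‖ * ‖C‖ := by rw [hSC, norm_mul]
    _ ≤ Real.sqrt b * ∑' k : ℤ, Real.exp (-(b * π) * (k : ℝ) ^ 2) := by
        rw [hbpow]
        refine mul_le_mul_of_nonneg_left ?_ (Real.sqrt_nonneg b)
        calc ‖C‖ ≤ ∑' n : ℤ, ‖Complex.exp (-(π : ℂ) * b * (n : ℂ) ^ 2 +
              2 * π * ((t : ℂ) * Complex.I) * (n : ℂ))‖ := norm_tsum_le_tsum_norm hsummable
          _ = ∑' k : ℤ, Real.exp (-(b * π) * (k : ℝ) ^ 2) := tsum_congr hnorm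
end

section
/- For every r > 0, every z ∈ ℝ², and every f ∈ L²(ℝ), the Gabor transform satisfies |𝒢f(z)| ≤ (√(e^{πr²} − 1)/(πr²)) · ‖𝒢f‖_{L²(B_r(z))}. -/
open Real MeasureTheory

open Set

/-- The Gabor transform (short-time Fourier transform with Gaussian window):
`𝒢f(x,ω) = 2^{1/4} ∫ f(t) e^{-π(t-x)²} e^{-2πiωt} dt`. -/
noncomputable def gabor (f : ℝ → ℂ) (x ω : ℝ) : ℂ :=
  ((2 ^ ((1 : ℝ) / 4) : ℝ) : ℂ) *
    ∫ t : ℝ, f t * Complex.exp (-(π : ℂ) * ((t : ℂ) - (x : ℂ)) ^ 2) *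
      Complex.exp (-2 * (π : ℂ) * Complex.I * (ω : ℂ) * (t : ℂ))

noncomputable def psi (a : ℝ) (t : ℝ) : ℝ := (1 + |t|) * Real.exp (a * |t| - π * t ^ 2)

lemma psi_nonneg (a t : ℝ) : 0 ≤ psi a t := by
  unfold psi
  positivity

lemma psi_continuous (a : ℝ) : Continuous (psi a) := by
  unfold psi; fun_prop

lemma psi_mem (a : ℝ) : MemLp (psi a) 2 (volume : Measure ℝ) := by
  rw [memLp_two_iff_integrable_sq ((psi_continuous a).aestronglyMeasurable)]
  have h1 : Integrable (fun t : ℝ => Real.exp (-π * t ^ 2)) := integrable_exp_neg_mul_sq pi_pos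
  have h2 : Integrable (fun t : ℝ => t ^ 2 * Real.exp (-π * t ^ 2)) := by
    have := integrable_rpow_mul_exp_neg_mul_sq pi_pos (s := 2) (by norm_num)
    simpa [Real.rpow_natCast] using this
  have hmaj : Integrable (fun t : ℝ =>
      Real.exp (a ^ 2 / π) * ((2 + 2 * t ^ 2) * Real.exp (-π * t ^ 2))) := by
    refine Integrable.const_mul ?_ _
    have : (fun t : ℝ => (2 + 2 * t ^ 2) * Real.exp (-π * t ^ 2)) =
        (fun t : ℝ => 2 * Real.exp (-π * t ^ 2) + 2 * (t ^ 2 * Real.exp (-π * t ^ 2))) := by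
      funext t; ring
    rw [this]
    exact ((h1.const_mul 2).add ((h2.const_mul 2)))
  refine hmaj.mono' (((psi_continuous a).pow 2).aestronglyMeasurable) ?_
  refine Filter.Eventually.of_forall (fun t => ?_)
  have habs : 0 ≤ |t| := abs_nonneg t
  have ht2 : |t| ^ 2 = t ^ 2 := sq_abs t
  rw [Real.norm_eq_abs, abs_of_nonneg (by positivity : (0:ℝ) ≤ psi a t ^ 2)]
  unfold psi
  rw [mul_pow, ← Real.exp_nat_mul]
  have e1 : (1 + |t|) ^ 2 ≤ 2 + 2 * t ^ 2 := by nlinarith [sq_nonneg (1 - |t|)]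
  have e2 : Real.exp ((2:ℕ) * (a * |t| - π * t ^ 2)) ≤
      Real.exp (a ^ 2 / π) * Real.exp (-π * t ^ 2) := by
    rw [← Real.exp_add]
    apply Real.exp_le_exp.2
    have hπ : 0 < π := pi_pos
    have key : 2 * (a * |t|) ≤ π * t ^ 2 + a ^ 2 / π := by
      have h := sq_nonneg (π * |t| - a)
      have hd : a ^ 2 / π * π = a ^ 2 := div_mul_cancel₀ _ hπ.ne'
      have hsq : π * (π * t ^ 2) = (π * |t|) ^ 2 := by rw [← ht2]; ring
      have hmul : 2 * (a * |t|) * π ≤ (π * t ^ 2 + a ^ 2 / π) * π := by nlinarith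
      exact le_of_mul_le_mul_right hmul hπ
    push_cast
    linarith
  calc (1 + |t|) ^ 2 * Real.exp ((2:ℕ) * (a * |t| - π * t ^ 2))
      ≤ (2 + 2 * t ^ 2) * (Real.exp (a ^ 2 / π) * Real.exp (-π * t ^ 2)) := by
        apply mul_le_mul e1 e2 (Real.exp_nonneg _) (by positivity)
    _ = Real.exp (a ^ 2 / π) * ((2 + 2 * t ^ 2) * Real.exp (-π * t ^ 2)) := by ring

lemma dom_int {f : ℝ → ℂ} (hf : MemLp f 2 (volume : Measure ℝ)) (a : ℝ) :
    Integrable (fun t : ℝ => psi a t * ‖f t‖) := by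
  have h := hf.norm.smul (psi_mem a) (r := 1)
    (hpqr := ⟨by rw [inv_one]; exact ENNReal.inv_two_add_inv_two⟩)
  rw [← memLp_one_iff_integrable]
  exact h


noncomputable def Fb (f : ℝ → ℂ) (w : ℂ) : ℂ :=
  ∫ t : ℝ, f t * Complex.exp (((2 * π * t : ℝ) : ℂ) * w - ((π * t ^ 2 : ℝ) : ℂ))

lemma norm_integrand (f : ℝ → ℂ) (w : ℂ) (t : ℝ) :
    ‖f t * Complex.exp (((2 * π * t : ℝ) : ℂ) * w - ((π * t ^ 2 : ℝ) : ℂ))‖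
      = ‖f t‖ * Real.exp (2 * π * t * w.re - π * t ^ 2) := by
  rw [norm_mul, Complex.norm_exp]
  congr 2
  simp only [Complex.sub_re, Complex.re_ofReal_mul, Complex.ofReal_re]

lemma exp_re_le (a : ℝ) (c : ℝ) (hc : |c| ≤ a / (2 * π)) (t : ℝ) :
    Real.exp (2 * π * t * c - π * t ^ 2) ≤ psi a t := by
  unfold psi
  have h2π : (0:ℝ) < 2 * π := by positivity
  have h1 : 2 * π * t * c ≤ a * |t| := by
    calc 2 * π * t * c ≤ |2 * π * t * c| := le_abs_self _
      _ = (2 * π) * |t| * |c| := by rw [abs_mul, abs_mul, abs_of_pos h2π]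
      _ ≤ (2 * π) * |t| * (a / (2 * π)) := by
          apply mul_le_mul_of_nonneg_left hc (by positivity)
      _ = a * |t| := by field_simp
  have h2 : Real.exp (2 * π * t * c - π * t ^ 2) ≤ Real.exp (a * |t| - π * t ^ 2) :=
    Real.exp_le_exp.2 (by linarith)
  have h3 : Real.exp (a * |t| - π * t ^ 2) ≤ (1 + |t|) * Real.exp (a * |t| - π * t ^ 2) := by
    nlinarith [Real.exp_pos (a * |t| - π * t ^ 2), abs_nonneg t]
  linarith

lemma norm_cexp' (w : ℂ) (t : ℝ) :
    ‖Complex.exp (((2 * π * t : ℝ) : ℂ) * w - ((π * t ^ 2 : ℝ) : ℂ))‖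
      = Real.exp (2 * π * t * w.re - π * t ^ 2) := by
  rw [Complex.norm_exp]
  congr 1
  simp only [Complex.sub_re, Complex.re_ofReal_mul, Complex.ofReal_re]

lemma integrand_asm {f : ℝ → ℂ} (hf : MemLp f 2 (volume : Measure ℝ)) (w : ℂ) :
    AEStronglyMeasurable
      (fun t : ℝ => f t * Complex.exp (((2 * π * t : ℝ) : ℂ) * w - ((π * t ^ 2 : ℝ) : ℂ)))
      volume := by
  apply hf.1.mul
  apply Continuous.aestronglyMeasurable
  fun_prop

lemma integrand_integrable {f : ℝ → ℂ} (hf : MemLp f 2 (volume : Measure ℝ)) (w : ℂ) :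
    Integrable
      (fun t : ℝ => f t * Complex.exp (((2 * π * t : ℝ) : ℂ) * w - ((π * t ^ 2 : ℝ) : ℂ))) := by
  refine (dom_int hf (2 * π * ‖w‖)).mono' (integrand_asm hf w) ?_
  refine Filter.Eventually.of_forall (fun t => ?_)
  rw [norm_integrand]
  have h1 : Real.exp (2 * π * t * w.re - π * t ^ 2) ≤ psi (2 * π * ‖w‖) t := by
    apply exp_re_le
    have h2π : (0:ℝ) < 2 * π := by positivity
    have heq : 2 * π * ‖w‖ / (2 * π) = ‖w‖ := by field_simp
    rw [heq]
    exact Complex.abs_re_le_norm w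
  calc ‖f t‖ * Real.exp (2 * π * t * w.re - π * t ^ 2)
      ≤ ‖f t‖ * psi (2 * π * ‖w‖) t := by
        apply mul_le_mul_of_nonneg_left h1 (norm_nonneg _)
    _ = psi (2 * π * ‖w‖) t * ‖f t‖ := mul_comm _ _

lemma Fb_differentiable {f : ℝ → ℂ} (hf : MemLp f 2 (volume : Measure ℝ)) :
    Differentiable ℂ (Fb f) := by
  intro w₀
  set a : ℝ := 2 * π * (‖w₀‖ + 1) with ha
  have key := hasDerivAt_integral_of_dominated_loc_of_deriv_le
    (μ := (volume : Measure ℝ)) (𝕜 := ℂ)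
    (F := fun w t => f t * Complex.exp (((2 * π * t : ℝ) : ℂ) * w - ((π * t ^ 2 : ℝ) : ℂ)))
    (F' := fun w t => f t *
      (Complex.exp (((2 * π * t : ℝ) : ℂ) * w - ((π * t ^ 2 : ℝ) : ℂ)) * ((2 * π * t : ℝ) : ℂ)))
    (x₀ := w₀) (bound := fun t => 2 * π * (psi a t * ‖f t‖)) (s := Metric.ball w₀ 1) (Metric.ball_mem_nhds w₀ one_pos)
    (Filter.Eventually.of_forall (fun w => integrand_asm hf w)) (integrand_integrable hf w₀)
    ?_ ?_ ?_ ?_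
  · exact ⟨_, key.2⟩
  · -- measurability of F' w₀
    apply AEStronglyMeasurable.mul hf.1
    apply Continuous.aestronglyMeasurable
    fun_prop
  · -- bound
    refine Filter.Eventually.of_forall (fun t => fun w hw => ?_)
    have hwn : ‖w‖ ≤ ‖w₀‖ + 1 := by
      have := mem_closedBall_iff_norm.1 (Metric.ball_subset_closedBall hw)
      calc ‖w‖ = ‖w₀ + (w - w₀)‖ := by ring_nf
        _ ≤ ‖w₀‖ + ‖w - w₀‖ := norm_add_le _ _
        _ ≤ ‖w₀‖ + 1 := by linarith
    rw [norm_mul, norm_mul, norm_cexp']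
    have h1 : Real.exp (2 * π * t * w.re - π * t ^ 2) ≤
        Real.exp (a * |t| - π * t ^ 2) := by
      apply Real.exp_le_exp.2
      have : 2 * π * t * w.re ≤ a * |t| := by
        calc 2 * π * t * w.re ≤ |2 * π * t * w.re| := le_abs_self _
          _ = (2 * π) * |t| * |w.re| := by
              rw [abs_mul, abs_mul, abs_of_pos (by positivity : (0:ℝ) < 2 * π)]
          _ ≤ (2 * π) * |t| * (‖w₀‖ + 1) := by
              apply mul_le_mul_of_nonneg_left _ (by positivity)
              exact le_trans (Complex.abs_re_le_norm w) hwn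
          _ = a * |t| := by rw [ha]; ring
      linarith
    have h2 : ‖((2 * π * t : ℝ) : ℂ)‖ = 2 * π * |t| := by
      rw [Complex.norm_real, Real.norm_eq_abs, abs_mul,
        abs_of_pos (by positivity : (0:ℝ) < 2 * π)]
    calc ‖f t‖ * (Real.exp (2 * π * t * w.re - π * t ^ 2) * ‖((2 * π * t : ℝ) : ℂ)‖)
        ≤ ‖f t‖ * (Real.exp (a * |t| - π * t ^ 2) * (2 * π * (1 + |t|))) := by
          apply mul_le_mul_of_nonneg_left _ (norm_nonneg _)
          rw [h2]
          apply mul_le_mul h1 (by nlinarith [abs_nonneg t, pi_pos]) (by positivity)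
            (Real.exp_nonneg _)
      _ = 2 * π * (psi a t * ‖f t‖) := by unfold psi; ring
  · exact (dom_int hf a).const_mul _
  · -- differentiability of integrand
    refine Filter.Eventually.of_forall (fun t => fun w _ => ?_)
    have h1 : HasDerivAt (fun w : ℂ => ((2 * π * t : ℝ) : ℂ) * w - ((π * t ^ 2 : ℝ) : ℂ))
        ((2 * π * t : ℝ) : ℂ) w := by
      simpa using ((hasDerivAt_id w).const_mul (((2 * π * t : ℝ)) : ℂ)).sub_const ((π * t ^ 2 : ℝ) : ℂ)
    exact (h1.cexp).const_mul (f t)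

noncomputable def Gb (f : ℝ → ℂ) (w : ℂ) : ℂ :=
  Complex.exp (-(π : ℂ) * w ^ 2 / 2) * Fb f w

lemma gabor_eq (f : ℝ → ℂ) (x y : ℝ) :
    gabor f x y = ((2 ^ ((1 : ℝ) / 4) : ℝ) : ℂ) *
      (Complex.exp (-((π * x ^ 2 : ℝ) : ℂ)) * Fb f ((x : ℂ) - (y : ℂ) * Complex.I)) := by
  unfold gabor Fb
  congr 1
  rw [← MeasureTheory.integral_const_mul]
  congr 1
  funext t
  have key : Complex.exp (-(π:ℂ) * ((t:ℂ)-(x:ℂ))^2) * Complex.exp (-2*(π:ℂ)*Complex.I*(y:ℂ)*(t:ℂ))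
      = Complex.exp (-((π*x^2:ℝ):ℂ)) *
        Complex.exp (((2*π*t:ℝ):ℂ)*((x:ℂ)-(y:ℂ)*Complex.I) - ((π*t^2:ℝ):ℂ)) := by
    rw [← Complex.exp_add, ← Complex.exp_add]
    congr 1
    push_cast
    ring
  rw [mul_assoc, key]
  ring

lemma norm_gabor_eq (f : ℝ → ℂ) (x y : ℝ) :
    ‖gabor f x y‖ = 2 ^ ((1 : ℝ) / 4) * Real.exp (-π * (x ^ 2 + y ^ 2) / 2) *
      ‖Gb f ((x : ℂ) - (y : ℂ) * Complex.I)‖ := by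
  have h1 : ‖Complex.exp (-((π * x ^ 2 : ℝ) : ℂ))‖ = Real.exp (-(π * x ^ 2)) := by
    rw [Complex.norm_exp]
    congr 1
  have hw : (-(π : ℂ) * ((x : ℂ) - (y : ℂ) * Complex.I) ^ 2 / 2) =
      (((-π * (x ^ 2 - y ^ 2) / 2 : ℝ)) : ℂ) + ((π * x * y : ℝ) : ℂ) * Complex.I := by
    have : ((x : ℂ) - (y : ℂ) * Complex.I) ^ 2
        = ((x^2 - y^2 : ℝ) : ℂ) - ((2 * x * y : ℝ) : ℂ) * Complex.I := by
      have hI : (Complex.I : ℂ) ^ 2 = -1 := Complex.I_sq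
      push_cast
      linear_combination ((y:ℂ))^2 * hI
    rw [this]
    push_cast
    ring
  have h2 : ‖Complex.exp (-(π : ℂ) * ((x : ℂ) - (y : ℂ) * Complex.I) ^ 2 / 2)‖
      = Real.exp (-π * (x ^ 2 - y ^ 2) / 2) := by
    rw [hw, Complex.norm_exp]
    congr 1
    simp only [Complex.add_re, Complex.ofReal_re, Complex.mul_re, Complex.I_re, Complex.I_im,
      Complex.ofReal_im, mul_zero, mul_one, zero_mul, sub_zero, add_zero, zero_sub, neg_zero]
  rw [gabor_eq, norm_mul, norm_mul]
  unfold Gb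
  rw [norm_mul, h1, h2]
  have h3 : ‖((2 ^ ((1 : ℝ) / 4) : ℝ) : ℂ)‖ = 2 ^ ((1 : ℝ) / 4) := by
    rw [Complex.norm_real, Real.norm_eq_abs, abs_of_pos (by positivity)]
  rw [h3]
  have h4 : Real.exp (-π * (x ^ 2 + y ^ 2) / 2) * Real.exp (-π * (x ^ 2 - y ^ 2) / 2)
      = Real.exp (-(π * x ^ 2)) := by
    rw [← Real.exp_add]; ring_nf
  rw [← h4]; ring

lemma mean_value_sq {H : ℂ → ℂ} (hH : Differentiable ℂ H) (c : ℂ) {s : ℝ} (hs : 0 < s) :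
    2 * π * ‖H c‖ ^ 2 ≤ ∫ θ in (0:ℝ)..(2 * π), ‖H (circleMap c s θ)‖ ^ 2 := by
  set f : ℂ → ℂ := fun w => (H w) ^ 2 with hf
  have hfd : Differentiable ℂ f := fun w => (hH w).pow 2
  have key := Complex.circleIntegral_sub_center_inv_smul_of_differentiable_on_off_countable
    (R := s) (c := c) (f := f) hs (s := (∅ : Set ℂ)) countable_empty
    (hfd.continuous.continuousOn) (fun z _ => hfd z)
  rw [circleIntegral] at key
  have step : ∀ θ : ℝ, deriv (circleMap c s) θ • (circleMap c s θ - c)⁻¹ • f (circleMap c s θ)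
      = Complex.I * f (circleMap c s θ) := by
    intro θ
    rw [deriv_circleMap, circleMap_sub_center, smul_eq_mul, smul_eq_mul]
    have hne : circleMap 0 s θ ≠ 0 := fun h => hs.ne' (circleMap_eq_center_iff.1 h)
    field_simp
  simp_rw [step] at key
  rw [intervalIntegral.integral_const_mul] at key
  have key2 : (∫ θ in (0:ℝ)..(2 * π), f (circleMap c s θ)) = (2 * π : ℂ) * f c := by
    have hI : (Complex.I : ℂ) ≠ 0 := Complex.I_ne_zero
    apply mul_left_cancel₀ hI
    rw [key, smul_eq_mul]
    ring
  have hnorm : ‖(2 * π : ℂ) * f c‖ = 2 * π * ‖H c‖ ^ 2 := by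
    rw [norm_mul, hf]
    simp only [norm_pow]
    congr 1
    rw [show ((2 * π : ℂ)) = ((2 * π : ℝ) : ℂ) by push_cast; ring, Complex.norm_real,
      Real.norm_eq_abs, abs_of_pos Real.two_pi_pos]
  calc 2 * π * ‖H c‖ ^ 2 = ‖(2 * π : ℂ) * f c‖ := hnorm.symm
    _ = ‖∫ θ in (0:ℝ)..(2 * π), f (circleMap c s θ)‖ := by rw [key2]
    _ ≤ ∫ θ in (0:ℝ)..(2 * π), ‖f (circleMap c s θ)‖ :=
        intervalIntegral.norm_integral_le_integral_norm Real.two_pi_pos.le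
    _ = ∫ θ in (0:ℝ)..(2 * π), ‖H (circleMap c s θ)‖ ^ 2 := by
        simp only [hf, norm_pow]

noncomputable def uu (G : ℂ → ℂ) (w : ℂ) : ℝ := ‖G w‖ ^ 2 * Real.exp (-π * ‖w‖ ^ 2)

lemma uu_nonneg (G : ℂ → ℂ) (w : ℂ) : 0 ≤ uu G w := by unfold uu; positivity

lemma uu_continuous {G : ℂ → ℂ} (hG : Continuous G) : Continuous (uu G) := by
  unfold uu
  have : Continuous fun w : ℂ => ‖w‖ := continuous_norm
  fun_prop

noncomputable def HH (G : ℂ → ℂ) (c : ℂ) (w : ℂ) : ℂ :=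
  G w * Complex.exp (-(π : ℂ) * ((starRingEnd ℂ) c * w) + ((π * ‖c‖ ^ 2 / 2 : ℝ) : ℂ))

lemma HH_differentiable {G : ℂ → ℂ} (hG : Differentiable ℂ G) (c : ℂ) :
    Differentiable ℂ (HH G c) := by
  apply hG.mul
  apply Differentiable.cexp
  apply Differentiable.add_const
  apply Differentiable.const_mul
  exact (differentiable_id.const_mul _)

lemma uu_eq_HH (G : ℂ → ℂ) (c w : ℂ) :
    uu G w = ‖HH G c w‖ ^ 2 * Real.exp (-π * ‖w - c‖ ^ 2) := by
  unfold uu HH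
  rw [norm_mul, mul_pow]
  have hre : (-(π : ℂ) * ((starRingEnd ℂ) c * w) + ((π * ‖c‖ ^ 2 / 2 : ℝ) : ℂ)).re
      = -π * ((starRingEnd ℂ) c * w).re + π * ‖c‖ ^ 2 / 2 := by
    rw [Complex.add_re, Complex.ofReal_re]
    congr 1
    rw [show (-(π : ℂ)) * ((starRingEnd ℂ) c * w) = (((-π : ℝ)) : ℂ) * ((starRingEnd ℂ) c * w)
      by push_cast; ring, Complex.re_ofReal_mul]
  have hnexp : ‖Complex.exp (-(π : ℂ) * ((starRingEnd ℂ) c * w)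
      + ((π * ‖c‖ ^ 2 / 2 : ℝ) : ℂ))‖
      = Real.exp (-π * ((starRingEnd ℂ) c * w).re + π * ‖c‖ ^ 2 / 2) := by
    rw [Complex.norm_exp, hre]
  rw [hnexp, ← Real.exp_nat_mul, mul_assoc, ← Real.exp_add]
  congr 1
  have h1 : ‖w - c‖ ^ 2 = ‖w‖ ^ 2 + ‖c‖ ^ 2
      - 2 * (w * (starRingEnd ℂ) c).re := by
    rw [Complex.sq_norm, Complex.sq_norm, Complex.sq_norm]
    exact Complex.normSq_sub w c
  have h2 : ((starRingEnd ℂ) c * w).re = (w * (starRingEnd ℂ) c).re := by rw [mul_comm]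
  rw [h1, h2]
  push_cast
  ring

lemma uu_center (G : ℂ → ℂ) (c : ℂ) : uu G c = ‖HH G c c‖ ^ 2 := by
  rw [uu_eq_HH G c c]
  simp

lemma ball_bound {G : ℂ → ℂ} (hG : Differentiable ℂ G) (c : ℂ) {r : ℝ} (hr : 0 < r) :
    (1 - Real.exp (-π * r ^ 2)) * uu G c ≤ ∫ w in Metric.ball c r, uu G w := by
  have hHd : Differentiable ℂ (HH G c) := HH_differentiable hG c
  have hu_cont : Continuous (uu G) := uu_continuous hG.continuous
  set v : ℂ → ℝ := fun w => uu G (c + w) with hv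
  have hv_cont : Continuous v := hu_cont.comp (continuous_const.add continuous_id)
  -- translation
  have htrans : (∫ w in Metric.ball c r, uu G w) = ∫ w in Metric.ball (0:ℂ) r, v w := by
    have hmp : MeasurePreserving (fun w : ℂ => c + w) volume volume :=
      measurePreserving_add_left volume c
    have hemb : MeasurableEmbedding (fun w : ℂ => c + w) :=
      (MeasurableEquiv.addLeft c).measurableEmbedding
    have hpre : (fun w : ℂ => c + w) ⁻¹' (Metric.ball c r) = Metric.ball (0:ℂ) r := by
      ext w
      simp [Metric.mem_ball, dist_eq_norm]
    rw [← hmp.setIntegral_preimage_emb hemb (uu G) (Metric.ball c r), hpre]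
  rw [htrans]
  -- polar coordinates
  set g : ℝ × ℝ → ℝ := fun p => p.1 * v (Complex.polarCoord.symm p) with hg
  set S : Set (ℝ × ℝ) := Ioo (0:ℝ) r ×ˢ Ioo (-π) π with hS
  have hSsub : S ⊆ polarCoord.target := by
    rw [polarCoord_target]
    exact prod_mono Ioo_subset_Ioi_self subset_rfl
  have hSmeas : MeasurableSet S := measurableSet_Ioo.prod measurableSet_Ioo
  have hpolar : (∫ w in Metric.ball (0:ℂ) r, v w) = ∫ p in S, g p := by
    rw [← integral_indicator measurableSet_ball,
      ← Complex.integral_comp_polarCoord_symm (fun w => (Metric.ball (0:ℂ) r).indicator v w)]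
    have hcongr : ∀ p ∈ polarCoord.target,
        p.1 • (Metric.ball (0:ℂ) r).indicator v (Complex.polarCoord.symm p)
          = S.indicator g p := by
      intro p hp
      rw [polarCoord_target] at hp
      obtain ⟨hp1, hp2⟩ := hp
      rw [mem_Ioi] at hp1
      by_cases hpr : p.1 < r
      · have hmem : Complex.polarCoord.symm p ∈ Metric.ball (0:ℂ) r := by
          rw [Metric.mem_ball, dist_zero_right, 
            Complex.norm_polarCoord_symm, abs_of_pos hp1]
          exact hpr
        rw [indicator_of_mem hmem, indicator_of_mem (show p ∈ S from ⟨⟨hp1, hpr⟩, hp2⟩)]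
        simp [hg, smul_eq_mul]
      · have hmem : Complex.polarCoord.symm p ∉ Metric.ball (0:ℂ) r := by
          rw [Metric.mem_ball, dist_zero_right, 
            Complex.norm_polarCoord_symm, abs_of_pos hp1]
          exact hpr
        rw [indicator_of_notMem hmem, indicator_of_notMem
          (show p ∉ S from fun hmemS => hpr hmemS.1.2)]
        simp
    rw [setIntegral_congr_fun polarCoord.open_target.measurableSet hcongr,
      setIntegral_indicator hSmeas, inter_eq_self_of_subset_right hSsub]
  rw [hpolar]
  -- continuity and integrability of g
  have hsymm_cont : Continuous (fun p : ℝ × ℝ => Complex.polarCoord.symm p) := by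
    simp only [Complex.polarCoord_symm_apply]
    fun_prop
  have hg_cont : Continuous g := continuous_fst.mul (hv_cont.comp hsymm_cont)
  have hK : IsCompact (Icc (0:ℝ) r ×ˢ Icc (-π) π) := isCompact_Icc.prod isCompact_Icc
  have hgi : IntegrableOn g S volume :=
    (hg_cont.continuousOn.integrableOn_compact hK).mono_set
      (prod_mono Ioo_subset_Icc_self Ioo_subset_Icc_self)
  -- Fubini
  rw [Measure.volume_eq_prod] at hgi ⊢
  rw [hS, setIntegral_prod g hgi]
  -- pointwise description of g on circles
  have hsym : ∀ s θ : ℝ, (Complex.polarCoord.symm (s, θ)) = circleMap 0 s θ := by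
    intro s θ
    rw [Complex.polarCoord_symm_apply, circleMap]
    push_cast
    rw [Complex.exp_mul_I]
    push_cast
    ring
  have hval : ∀ s ∈ Ioo (0:ℝ) r, ∀ θ : ℝ,
      g (s, θ) = (s * Real.exp (-π * s ^ 2)) * ‖HH G c (circleMap c s θ)‖ ^ 2 := by
    intro s hs θ
    have h1 : v (Complex.polarCoord.symm (s, θ)) = uu G (circleMap c s θ) := by
      rw [hsym]
      simp only [hv]
      congr 1
      rw [circleMap_zero, circleMap]
    have h2 : uu G (circleMap c s θ)
        = ‖HH G c (circleMap c s θ)‖ ^ 2 * Real.exp (-π * s ^ 2) := by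
      rw [uu_eq_HH G c (circleMap c s θ)]
      congr 2
      rw [circleMap_sub_center, norm_circleMap_zero, abs_of_pos hs.1]
    simp only [hg]
    rw [h1, h2]
    ring
  -- inner bound
  have hinner : ∀ s ∈ Ioo (0:ℝ) r,
      (2 * π * ‖HH G c c‖ ^ 2) * (s * Real.exp (-π * s ^ 2))
        ≤ ∫ θ in Ioo (-π) π, g (s, θ) := by
    intro s hs
    have e1 : (∫ θ in Ioo (-π) π, g (s, θ))
        = (s * Real.exp (-π * s ^ 2)) * ∫ θ in Ioo (-π) π, ‖HH G c (circleMap c s θ)‖ ^ 2 := by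
      rw [← MeasureTheory.integral_const_mul]
      exact setIntegral_congr_fun measurableSet_Ioo (fun θ _ => hval s hs θ)
    have e2 : (∫ θ in Ioo (-π) π, ‖HH G c (circleMap c s θ)‖ ^ 2)
        = ∫ θ in (0:ℝ)..(2*π), ‖HH G c (circleMap c s θ)‖ ^ 2 := by
      rw [← integral_Ioc_eq_integral_Ioo, ← intervalIntegral.integral_of_le
        (by linarith [pi_pos] : (-π:ℝ) ≤ π)]
      have hper : Function.Periodic (fun θ : ℝ => ‖HH G c (circleMap c s θ)‖ ^ 2) (2*π) := by
        intro θ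
        simp [periodic_circleMap c s θ]
      have := hper.intervalIntegral_add_eq (-π) 0
      simpa [show -π + 2*π = π from by ring, zero_add] using this
    rw [e1, e2]
    have hmv := mean_value_sq hHd c hs.1
    have hnn : 0 ≤ s * Real.exp (-π * s ^ 2) := mul_nonneg hs.1.le (Real.exp_nonneg _)
    calc (2 * π * ‖HH G c c‖ ^ 2) * (s * Real.exp (-π * s ^ 2))
        = (s * Real.exp (-π * s ^ 2)) * (2 * π * ‖HH G c c‖ ^ 2) := by ring
      _ ≤ (s * Real.exp (-π * s ^ 2)) *
          ∫ θ in (0:ℝ)..(2*π), ‖HH G c (circleMap c s θ)‖ ^ 2 :=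
          mul_le_mul_of_nonneg_left hmv hnn
  -- outer estimate
  have h_out_int : IntegrableOn (fun s => ∫ θ in Ioo (-π) π, g (s, θ)) (Ioo (0:ℝ) r) volume := by
    have h2 := hgi
    unfold IntegrableOn at h2
    rw [← Measure.prod_restrict] at h2
    exact h2.integral_prod_left
  have h_lhs_int : IntegrableOn
      (fun s => (2 * π * ‖HH G c c‖ ^ 2) * (s * Real.exp (-π * s ^ 2))) (Ioo (0:ℝ) r) volume :=
    ((integrable_mul_exp_neg_mul_sq pi_pos).const_mul _).integrableOn
  have houter := setIntegral_mono_on h_lhs_int h_out_int measurableSet_Ioo hinner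
  -- radial integral
  have hradial : (∫ s in Ioo (0:ℝ) r, s * Real.exp (-π * s ^ 2))
      = (1 - Real.exp (-π * r ^ 2)) / (2*π) := by
    rw [← integral_Ioc_eq_integral_Ioo, ← intervalIntegral.integral_of_le hr.le]
    have hderiv : ∀ x ∈ uIcc (0:ℝ) r, HasDerivAt (fun x : ℝ => -Real.exp (-π * x^2) / (2*π))
        (x * Real.exp (-π * x ^ 2)) x := by
      intro x _
      have h1 : HasDerivAt (fun x : ℝ => -π * x ^ 2) (-π * (2 * x)) x := by
        simpa using (hasDerivAt_pow 2 x).const_mul (-π)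
      have h2 := (h1.exp.neg).div_const (2*π)
      refine h2.congr_deriv ?_
      rw [div_eq_iff (by positivity)]
      ring
    rw [intervalIntegral.integral_eq_sub_of_hasDerivAt hderiv
      (Continuous.intervalIntegrable (by fun_prop) _ _)]
    field_simp
    rw [show π * (0:ℝ) ^ 2 = 0 by ring, neg_zero, Real.exp_zero]; ring
  rw [MeasureTheory.integral_const_mul, hradial] at houter
  rw [uu_center G c]
  have hπ : (0:ℝ) < π := pi_pos
  calc (1 - Real.exp (-π * r ^ 2)) * ‖HH G c c‖ ^ 2
      = 2 * π * ‖HH G c c‖ ^ 2 * ((1 - Real.exp (-π * r ^ 2)) / (2 * π)) := by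
        field_simp
    _ ≤ ∫ s in Ioo (0:ℝ) r, ∫ θ in Ioo (-π) π, g (s, θ) := houter

lemma Gb_differentiable {f : ℝ → ℂ} (hf : MemLp f 2 (volume : Measure ℝ)) :
    Differentiable ℂ (Gb f) := by
  apply Differentiable.mul _ (Fb_differentiable hf)
  apply Differentiable.cexp
  apply Differentiable.div_const
  exact (differentiable_pow 2).const_mul _

lemma sq_norm_gabor (f : ℝ → ℂ) (x y : ℝ) :
    ‖gabor f x y‖ ^ 2 = Real.sqrt 2 * uu (Gb f) ((x : ℂ) - (y : ℂ) * Complex.I) := by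
  rw [norm_gabor_eq, mul_pow, mul_pow]
  unfold uu
  have h1 : (2 ^ ((1:ℝ)/4)) ^ 2 = Real.sqrt 2 := by
    rw [← Real.rpow_natCast (2 ^ ((1:ℝ)/4)) 2, ← Real.rpow_mul (by norm_num : (0:ℝ) ≤ 2)]
    rw [Real.sqrt_eq_rpow]
    norm_num
  have h2 : Real.exp (-π * (x ^ 2 + y ^ 2) / 2) ^ 2
      = Real.exp (-π * ‖(x : ℂ) - (y : ℂ) * Complex.I‖ ^ 2) := by
    rw [← Real.exp_nat_mul]
    congr 1
    have habs : ‖(x : ℂ) - (y : ℂ) * Complex.I‖ ^ 2 = x ^ 2 + y ^ 2 := by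
      rw [Complex.sq_norm, Complex.normSq_apply]
      simp [Complex.sub_re, Complex.sub_im, Complex.mul_re, Complex.mul_im]
      ring
    rw [habs]
    push_cast
    ring
  rw [h1, h2]
  ring

lemma set_integral_eq (f : ℝ → ℂ) (z : ℝ × ℝ) {r : ℝ} (hr : 0 < r) :
    (∫ w in {w : ℝ × ℝ | (w.1 - z.1) ^ 2 + (w.2 - z.2) ^ 2 < r ^ 2},
        ‖gabor f w.1 w.2‖ ^ 2)
      = ∫ w in Metric.ball ((z.1 : ℂ) - (z.2 : ℂ) * Complex.I) r,
          Real.sqrt 2 * uu (Gb f) w := by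
  set c : ℂ := (z.1 : ℂ) - (z.2 : ℂ) * Complex.I with hc
  set T : ℝ × ℝ → ℝ × ℝ := fun p => (p.1, -p.2) with hT
  set Φ : ℝ × ℝ → ℂ := fun p => Complex.measurableEquivRealProd.symm (T p) with hΦ
  have hTmp : MeasurePreserving T volume volume := by
    rw [Measure.volume_eq_prod]
    exact (MeasurePreserving.id volume).prod (Measure.measurePreserving_neg volume)
  have hTemb : MeasurableEmbedding T := by
    have : T = fun p : ℝ × ℝ => (MeasurableEquiv.prodCongr (MeasurableEquiv.refl ℝ)
        (Homeomorph.neg ℝ).toMeasurableEquiv) p := rfl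
    rw [this]
    exact MeasurableEquiv.measurableEmbedding _
  have hmp : MeasurePreserving Φ volume volume :=
    (Complex.volume_preserving_equiv_real_prod.symm _).comp hTmp
  have hemb : MeasurableEmbedding Φ :=
    (MeasurableEquiv.measurableEmbedding _).comp hTemb
  have hΦval : ∀ p : ℝ × ℝ, Φ p = (p.1 : ℂ) - (p.2 : ℂ) * Complex.I := by
    intro p
    show Complex.measurableEquivRealProd.symm (p.1, -p.2) = _
    rw [Complex.measurableEquivRealProd_symm_apply, Complex.mk_eq_add_mul_I]
    push_cast
    ring
  have hpre : Φ ⁻¹' (Metric.ball c r)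
      = {w : ℝ × ℝ | (w.1 - z.1) ^ 2 + (w.2 - z.2) ^ 2 < r ^ 2} := by
    ext p
    rw [mem_preimage, Metric.mem_ball, Complex.dist_eq, Complex.norm_def, Real.sqrt_lt' hr,
      hΦval]
    have : Complex.normSq ((p.1 : ℂ) - (p.2 : ℂ) * Complex.I - c)
        = (p.1 - z.1) ^ 2 + (p.2 - z.2) ^ 2 := by
      rw [hc, Complex.normSq_apply]
      simp [Complex.sub_re, Complex.sub_im, Complex.mul_re, Complex.mul_im]
      ring
    rw [this]
    rfl
  have key := hmp.setIntegral_preimage_emb hemb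
    (fun w => Real.sqrt 2 * uu (Gb f) w) (Metric.ball c r)
  rw [hpre] at key
  rw [← key]
  apply setIntegral_congr_fun
  · rw [← hpre]
    exact hemb.measurable measurableSet_ball
  · intro p _
    show ‖gabor f p.1 p.2‖ ^ 2 = Real.sqrt 2 * uu (Gb f) (Φ p)
    rw [hΦval p, ← sq_norm_gabor]

/-- Pointwise bound for the Gabor transform by its local `L²` mass:
`|𝒢f(z)| ≤ (√(e^{πr²} − 1)/(πr²)) · ‖𝒢f‖_{L²(B_r(z))}` for all `r > 0`,
`z ∈ ℝ²` and `f ∈ L²(ℝ)`, where `B_r(z)` is the Euclidean ball in `ℝ²`. -/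
theorem gabor_pointwise_le_local_L2 (f : ℝ → ℂ) (hf : MemLp f 2 volume)
    (r : ℝ) (hr : 0 < r) (z : ℝ × ℝ) :
    ‖gabor f z.1 z.2‖ ≤
      Real.sqrt (Real.exp (π * r ^ 2) - 1) / (π * r ^ 2) *
        Real.sqrt
          (∫ w in {w : ℝ × ℝ | (w.1 - z.1) ^ 2 + (w.2 - z.2) ^ 2 < r ^ 2},
            ‖gabor f w.1 w.2‖ ^ 2) := by
  set c : ℂ := (z.1 : ℂ) - (z.2 : ℂ) * Complex.I with hc
  set t := π * r ^ 2 with ht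
  have htpos : 0 < t := by rw [ht]; positivity
  set I := ∫ w in {w : ℝ × ℝ | (w.1 - z.1) ^ 2 + (w.2 - z.2) ^ 2 < r ^ 2},
    ‖gabor f w.1 w.2‖ ^ 2 with hI
  set N := ‖gabor f z.1 z.2‖ with hN
  have hN0 : 0 ≤ N := norm_nonneg _
  have hG : Differentiable ℂ (Gb f) := Gb_differentiable hf
  have hb := ball_bound hG c hr
  have hIeq : I = Real.sqrt 2 * ∫ w in Metric.ball c r, uu (Gb f) w := by
    rw [hI, set_integral_eq f z hr, MeasureTheory.integral_const_mul]
  have hN2 : N ^ 2 = Real.sqrt 2 * uu (Gb f) c := sq_norm_gabor f z.1 z.2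
  have hI0 : 0 ≤ I := by
    rw [hI]
    apply integral_nonneg
    intro w
    positivity
  have hkey : (1 - Real.exp (-t)) * N ^ 2 ≤ I := by
    rw [hN2, hIeq]
    have h2 : (0:ℝ) ≤ Real.sqrt 2 := Real.sqrt_nonneg 2
    have h3 := mul_le_mul_of_nonneg_left hb h2
    calc (1 - Real.exp (-t)) * (Real.sqrt 2 * uu (Gb f) c)
        = Real.sqrt 2 * ((1 - Real.exp (-π * r ^ 2)) * uu (Gb f) c) := by
          rw [ht]; ring_nf
      _ ≤ Real.sqrt 2 * ∫ w in Metric.ball c r, uu (Gb f) w := h3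
  have hden : 0 < 1 - Real.exp (-t) := by
    have : Real.exp (-t) < 1 := Real.exp_lt_one_iff.2 (by linarith)
    linarith
  have hfrac : 1 / (1 - Real.exp (-t)) ≤ (Real.exp t - 1) / t ^ 2 := by
    rw [div_le_div_iff₀ hden (by positivity)]
    set a := Real.exp (t / 2) with hadef
    have ha : 0 < a := Real.exp_pos _
    have hsinh := Real.self_lt_sinh_iff.2 (show 0 < t / 2 by linarith)
    rw [Real.sinh_eq] at hsinh
    have hlt : t < a - 1 / a := by
      rw [Real.exp_neg, ← hadef] at hsinh
      rw [one_div]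
      linarith
    have hexp_t : Real.exp t = a * a := by
      rw [hadef, ← Real.exp_add]
      congr 1
      ring
    have hexp_mt : Real.exp (-t) = 1 / (a * a) := by
      rw [Real.exp_neg, hexp_t, one_div]
    rw [hexp_t, hexp_mt]
    have h1 : t ^ 2 ≤ (a - 1 / a) ^ 2 := by nlinarith
    have h2 : (a * a - 1) * (1 - 1 / (a * a)) = (a - 1 / a) ^ 2 := by
      field_simp
    rw [one_mul, h2]
    exact h1
  have hfinal2 : N ^ 2 ≤ (Real.exp t - 1) / t ^ 2 * I := by
    have step1 : N ^ 2 ≤ I / (1 - Real.exp (-t)) := by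
      rw [le_div_iff₀ hden]
      linarith [hkey]
    have step2 : I / (1 - Real.exp (-t)) ≤ (Real.exp t - 1) / t ^ 2 * I := by
      rw [div_eq_mul_one_div I _]
      calc I * (1 / (1 - Real.exp (-t))) ≤ I * ((Real.exp t - 1) / t ^ 2) :=
            mul_le_mul_of_nonneg_left hfrac hI0
        _ = (Real.exp t - 1) / t ^ 2 * I := mul_comm _ _
    linarith
  have hEt : (0:ℝ) ≤ Real.exp t - 1 := by
    have := Real.one_le_exp htpos.le
    linarith
  calc N = Real.sqrt (N ^ 2) := (Real.sqrt_sq hN0).symm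
    _ ≤ Real.sqrt ((Real.exp t - 1) / t ^ 2 * I) := Real.sqrt_le_sqrt hfinal2
    _ = Real.sqrt (Real.exp t - 1) / t * Real.sqrt I := by
        rw [Real.sqrt_mul (by positivity), Real.sqrt_div hEt, Real.sqrt_sq htpos.le]
end

section
/- Let f ∈ L²(ℝ) and let 𝒮f denote the entire extension of its spectrogram to ℂ². Then for all r ≥ 0, sup{|𝒮f(z)| : z ∈ ℂ², |Im z| = r} ≤ ‖𝒮f‖_{L^∞(ℝ²)} · e^{2πr²}. -/
open Real MeasureTheory

/-- The Bargmann transform. -/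
noncomputable def bargmann (f : ℝ → ℂ) (z : ℂ) : ℂ :=
  ((2 ^ ((1 : ℝ) / 4) : ℝ) : ℂ) *
    ∫ t : ℝ, f t * Complex.exp (2 * (π : ℂ) * (t : ℂ) * z - (π : ℂ) * (t : ℂ) ^ 2
      - (π : ℂ) / 2 * z ^ 2)

/-- The entire extension of the spectrogram to `ℂ²`:
`𝒮f(z₁,z₂) = Bf(z₁ − iz₂)(Bf)*(z₁ + iz₂)e^{-π(z₁²+z₂²)}`. -/
noncomputable def spectrogramExt (f : ℝ → ℂ) (z : ℂ × ℂ) : ℂ :=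
  bargmann f (z.1 - Complex.I * z.2) *
    (starRingEnd ℂ) (bargmann f ((starRingEnd ℂ) (z.1 + Complex.I * z.2))) *
    Complex.exp (-(π : ℂ) * (z.1 ^ 2 + z.2 ^ 2))

/-- The Bargmann transform equals the Gabor transform times an explicit exponential factor. -/
lemma bargmann_eq_gabor (f : ℝ → ℂ) (x ω : ℝ) :
    bargmann f ((x : ℂ) - Complex.I * (ω : ℂ)) =
      Complex.exp ((π : ℂ) * x ^ 2 - (π : ℂ) / 2 * ((x : ℂ) - Complex.I * (ω : ℂ)) ^ 2) *
        gabor f x ω := by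
  set z : ℂ := (x : ℂ) - Complex.I * (ω : ℂ) with hz
  have key : ∀ t : ℝ, f t * Complex.exp (2 * (π : ℂ) * (t : ℂ) * z - (π : ℂ) * (t : ℂ) ^ 2
      - (π : ℂ) / 2 * z ^ 2) =
      Complex.exp ((π : ℂ) * x ^ 2 - (π : ℂ) / 2 * z ^ 2) *
        (f t * Complex.exp (-(π : ℂ) * ((t : ℂ) - (x : ℂ)) ^ 2) *
          Complex.exp (-2 * (π : ℂ) * Complex.I * (ω : ℂ) * (t : ℂ))) := by
    intro t
    rw [show (2 * (π : ℂ) * (t : ℂ) * z - (π : ℂ) * (t : ℂ) ^ 2 - (π : ℂ) / 2 * z ^ 2)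
        = ((π : ℂ) * x ^ 2 - (π : ℂ) / 2 * z ^ 2) + (-(π : ℂ) * ((t : ℂ) - (x : ℂ)) ^ 2)
          + (-2 * (π : ℂ) * Complex.I * (ω : ℂ) * (t : ℂ)) by rw [hz]; ring,
      Complex.exp_add, Complex.exp_add]
    ring
  unfold bargmann gabor
  simp_rw [key, integral_const_mul]
  ring

/-- The norm of the Bargmann transform in terms of the Gabor transform. -/
lemma norm_bargmann (f : ℝ → ℂ) (x ω : ℝ) :
    ‖bargmann f ((x : ℂ) - Complex.I * (ω : ℂ))‖ =
      ‖gabor f x ω‖ * Real.exp (π / 2 * (x ^ 2 + ω ^ 2)) := by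
  rw [bargmann_eq_gabor, norm_mul, Complex.norm_exp]
  have : ((π : ℂ) * x ^ 2 - (π : ℂ) / 2 * ((x : ℂ) - Complex.I * (ω : ℂ)) ^ 2).re
      = π / 2 * (x ^ 2 + ω ^ 2) := by
    simp [Complex.sub_re, Complex.mul_re, Complex.mul_im, pow_two]
    ring
  rw [this]
  ring

/-- The Gabor transform of an `L²` function is uniformly bounded. -/
lemma gabor_bound (f : ℝ → ℂ) (hf : MemLp f 2 volume) :
    ∃ C : ℝ, 0 ≤ C ∧ ∀ x ω : ℝ, ‖gabor f x ω‖ ≤ C := by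
  set C : ℝ := 2 ^ ((1 : ℝ) / 4) *
    ((∫ t : ℝ, ‖f t‖ ^ (2 : ℝ)) ^ ((1 : ℝ) / 2) *
      (∫ t : ℝ, Real.exp (-π * t ^ 2) ^ (2 : ℝ)) ^ ((1 : ℝ) / 2)) with hC
  have hC0 : 0 ≤ C := by
    apply mul_nonneg (by positivity)
    apply mul_nonneg <;>
      exact Real.rpow_nonneg (integral_nonneg fun t => by positivity) _
  refine ⟨C, hC0, fun x ω => ?_⟩
  have hpq : Real.HolderConjugate 2 2 := ⟨by norm_num, by norm_num, by norm_num⟩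
  set g : ℝ → ℂ := fun t => ((Real.exp (-π * (t - x) ^ 2) : ℝ) : ℂ) with hg
  have hgnorm : ∀ t : ℝ, ‖g t‖ = Real.exp (-π * (t - x) ^ 2) := fun t => by
    show ‖((Real.exp (-π * (t - x) ^ 2) : ℝ) : ℂ)‖ = _
    simp only [Complex.norm_real]
    exact Real.norm_of_nonneg (Real.exp_nonneg _)
  have hreal : MemLp (fun t : ℝ => Real.exp (-π * (t - x) ^ 2)) 2 volume := by
    refine (memLp_two_iff_integrable_sq ?_).2 ?_
    · exact (Real.continuous_exp.comp (by continuity)).aestronglyMeasurable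
    · have h1 : Integrable (fun t : ℝ => Real.exp (-(2 * π) * t ^ 2)) volume :=
        integrable_exp_neg_mul_sq (by positivity)
      refine (h1.comp_sub_right x).congr (ae_of_all _ fun t => ?_)
      show Real.exp (-(2 * π) * (t - x) ^ 2) = Real.exp (-π * (t - x) ^ 2) ^ 2
      rw [← Real.exp_nat_mul]
      congr 1
      push_cast; ring
  have hgmem : MemLp g (ENNReal.ofReal 2) volume := by
    rw [show ENNReal.ofReal 2 = 2 by norm_num]
    exact hreal.ofReal
  have hfmem : MemLp f (ENNReal.ofReal 2) volume := by
    rwa [show ENNReal.ofReal 2 = 2 by norm_num]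
  have holder := integral_mul_norm_le_Lp_mul_Lq hpq hfmem hgmem
  have hgint : (∫ a : ℝ, ‖g a‖ ^ (2 : ℝ)) = ∫ t : ℝ, Real.exp (-π * t ^ 2) ^ (2 : ℝ) := by
    simp_rw [hgnorm]
    exact integral_sub_right_eq_self (fun t => Real.exp (-π * t ^ 2) ^ (2 : ℝ)) x
  have hnormeq : ∀ t : ℝ, ‖f t * Complex.exp (-(π : ℂ) * ((t : ℂ) - (x : ℂ)) ^ 2) *
      Complex.exp (-2 * (π : ℂ) * Complex.I * (ω : ℂ) * (t : ℂ))‖ = ‖f t‖ * ‖g t‖ := by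
    intro t
    rw [norm_mul, norm_mul, hgnorm]
    have h1 : ‖Complex.exp (-(π : ℂ) * ((t : ℂ) - (x : ℂ)) ^ 2)‖
        = Real.exp (-π * (t - x) ^ 2) := by
      rw [Complex.norm_exp]
      congr 1
      simp [Complex.mul_re, pow_two, Complex.sub_re, Complex.sub_im]
    have h2 : ‖Complex.exp (-2 * (π : ℂ) * Complex.I * (ω : ℂ) * (t : ℂ))‖ = 1 := by
      rw [Complex.norm_exp]
      convert Real.exp_zero using 2
      simp [Complex.mul_re, Complex.mul_im]
    rw [h1, h2, mul_one]
  calc ‖gabor f x ω‖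
      = 2 ^ ((1 : ℝ) / 4) * ‖∫ t : ℝ, f t * Complex.exp (-(π : ℂ) * ((t : ℂ) - (x : ℂ)) ^ 2) *
          Complex.exp (-2 * (π : ℂ) * Complex.I * (ω : ℂ) * (t : ℂ))‖ := by
        rw [gabor, norm_mul, Complex.norm_real, Real.norm_eq_abs, abs_of_pos (by positivity)]
    _ ≤ 2 ^ ((1 : ℝ) / 4) * ∫ t : ℝ, ‖f t‖ * ‖g t‖ :=
        mul_le_mul_of_nonneg_left ((norm_integral_le_integral_norm _).trans_eq
          (integral_congr_ae (ae_of_all _ hnormeq))) (by positivity)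
    _ ≤ 2 ^ ((1 : ℝ) / 4) * ((∫ a : ℝ, ‖f a‖ ^ (2 : ℝ)) ^ ((1 : ℝ) / 2) *
          (∫ a : ℝ, ‖g a‖ ^ (2 : ℝ)) ^ ((1 : ℝ) / 2)) :=
        mul_le_mul_of_nonneg_left holder (by positivity)
    _ = C := by rw [hC, hgint]

/-- Growth bound for the entire extension of the spectrogram: for all `r ≥ 0`,
`sup {|𝒮f(z)| : |Im z| = r} ≤ ‖𝒮f‖_{L^∞(ℝ²)} · e^{2πr²}`,
where on `ℝ²`, `𝒮f = |𝒢f|²`. -/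
theorem spectrogramExt_growth_bound (f : ℝ → ℂ) (hf : MemLp f 2 volume)
    (r : ℝ) (hr : 0 ≤ r) (z : ℂ × ℂ)
    (hz : Real.sqrt (z.1.im ^ 2 + z.2.im ^ 2) = r) :
    ‖spectrogramExt f z‖ ≤
      (⨆ p : ℝ × ℝ, ‖gabor f p.1 p.2‖ ^ 2) * Real.exp (2 * π * r ^ 2) := by
  obtain ⟨C, hC0, hCb⟩ := gabor_bound f hf
  have hbdd : BddAbove (Set.range fun p : ℝ × ℝ => ‖gabor f p.1 p.2‖ ^ 2) := by
    refine ⟨C ^ 2, ?_⟩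
    rintro _ ⟨p, rfl⟩
    exact pow_le_pow_left₀ (norm_nonneg _) (hCb p.1 p.2) 2
  have hM : ∀ x ω : ℝ, ‖gabor f x ω‖ ^ 2 ≤ ⨆ p : ℝ × ℝ, ‖gabor f p.1 p.2‖ ^ 2 :=
    fun x ω => le_ciSup hbdd (x, ω)
  have hr2 : z.1.im ^ 2 + z.2.im ^ 2 = r ^ 2 := by
    rw [← hz, Real.sq_sqrt (by positivity)]
  set w₁ : ℂ := z.1 - Complex.I * z.2 with hw₁
  set w₂ : ℂ := (starRingEnd ℂ) (z.1 + Complex.I * z.2) with hw₂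
  have e₁ : w₁ = ((w₁.re : ℝ) : ℂ) - Complex.I * (((-w₁.im : ℝ)) : ℂ) := by
    simp [Complex.ext_iff]
  have e₂ : w₂ = ((w₂.re : ℝ) : ℂ) - Complex.I * (((-w₂.im : ℝ)) : ℂ) := by
    simp [Complex.ext_iff]
  have hnorm : ‖spectrogramExt f z‖ =
      (‖gabor f w₁.re (-w₁.im)‖ * ‖gabor f w₂.re (-w₂.im)‖) *
        Real.exp ((π / 2 * (w₁.re ^ 2 + (-w₁.im) ^ 2)) +
          (π / 2 * (w₂.re ^ 2 + (-w₂.im) ^ 2)) + (-(π : ℂ) * (z.1 ^ 2 + z.2 ^ 2)).re) := by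
    rw [spectrogramExt, norm_mul, norm_mul, RCLike.norm_conj, ← hw₁, ← hw₂]
    rw [show ‖Complex.exp (-(π : ℂ) * (z.1 ^ 2 + z.2 ^ 2))‖
        = Real.exp ((-(π : ℂ) * (z.1 ^ 2 + z.2 ^ 2)).re) from by
        rw [Complex.norm_exp],
      show bargmann f w₁ = bargmann f (((w₁.re : ℝ) : ℂ) - Complex.I * (((-w₁.im : ℝ)) : ℂ))
        from by rw [← e₁],
      show bargmann f w₂ = bargmann f (((w₂.re : ℝ) : ℂ) - Complex.I * (((-w₂.im : ℝ)) : ℂ))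
        from by rw [← e₂],
      norm_bargmann, norm_bargmann, Real.exp_add, Real.exp_add]
    ring
  have hexp : (π / 2 * (w₁.re ^ 2 + (-w₁.im) ^ 2)) + (π / 2 * (w₂.re ^ 2 + (-w₂.im) ^ 2))
      + (-(π : ℂ) * (z.1 ^ 2 + z.2 ^ 2)).re = 2 * π * r ^ 2 := by
    rw [← hr2, hw₁, hw₂]
    simp only [Complex.sub_re, Complex.sub_im, Complex.add_re, Complex.add_im,
      Complex.mul_re, Complex.mul_im, Complex.I_re, Complex.I_im, Complex.neg_re,
      Complex.neg_im, Complex.conj_re, Complex.conj_im, Complex.ofReal_re,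
      Complex.ofReal_im, pow_two]
    ring
  rw [hnorm, hexp]
  refine mul_le_mul_of_nonneg_right ?_ (Real.exp_nonneg _)
  have h1 := hM w₁.re (-w₁.im)
  have h2 := hM w₂.re (-w₂.im)
  nlinarith [norm_nonneg (gabor f w₁.re (-w₁.im)), norm_nonneg (gabor f w₂.re (-w₂.im))]
end

section
/- Let f ∈ L²(ℝ), 𝒢f its Gabor transform, and 𝒮f the entire extension of the spectrogram. Define L(p,u) = p + (1/2)·[[1,−i],[i,1]]·u ∈ ℂ² and Q(p,u) = −(π/2)|u|² − πi(2p₁+u₁)u₂ for p,u ∈ ℝ². Then for all p,u ∈ ℝ²: 𝒢f(p+u) · conj(𝒢f(p)) = 𝒮f(L(p,u)) · e^{Q(p,u)}. -/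
open Real MeasureTheory

/-- The evaluation point `L(p,u) = p + (1/2)·[[1,−i],[i,1]]·u ∈ ℂ²`. -/
noncomputable def evalPoint (p u : ℝ × ℝ) : ℂ × ℂ :=
  ((p.1 : ℂ) + ((u.1 : ℂ) - Complex.I * (u.2 : ℂ)) / 2,
   (p.2 : ℂ) + (Complex.I * (u.1 : ℂ) + (u.2 : ℂ)) / 2)

/-- The exponent `Q(p,u) = −(π/2)|u|² − πi(2p₁+u₁)u₂`. -/
noncomputable def evalExponent (p u : ℝ × ℝ) : ℂ :=
  -(π : ℂ) / 2 * ((u.1 : ℂ) ^ 2 + (u.2 : ℂ) ^ 2) -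
    (π : ℂ) * Complex.I * (2 * (p.1 : ℂ) + (u.1 : ℂ)) * (u.2 : ℂ)

lemma gabor_eq_bargmann (f : ℝ → ℂ) (x ω : ℝ) :
    gabor f x ω = bargmann f ((x : ℂ) - Complex.I * (ω : ℂ)) *
      Complex.exp (-(π : ℂ) * Complex.I * (x : ℂ) * (ω : ℂ)
        - (π : ℂ) / 2 * ((x : ℂ) ^ 2 + (ω : ℂ) ^ 2)) := by
  unfold gabor bargmann
  conv_rhs => rw [mul_assoc, ← MeasureTheory.integral_mul_const]
  congr 1
  refine congrArg _ (funext fun t => ?_)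
  rw [mul_assoc, ← Complex.exp_add]
  conv_rhs => rw [mul_assoc, ← Complex.exp_add]
  congr 2
  linear_combination ((π : ℂ) * (ω : ℂ) ^ 2 / 2) * Complex.I_sq

/-- For all `p, u ∈ ℝ²`:
`𝒢f(p+u) · conj(𝒢f(p)) = 𝒮f(L(p,u)) · e^{Q(p,u)}`, where `𝒮f` is the entire
extension of the spectrogram. -/
theorem gabor_tensor_eq_eval_spectrogramExt (f : ℝ → ℂ) (hf : MemLp f 2 volume)
    (p u : ℝ × ℝ) :
    gabor f (p.1 + u.1) (p.2 + u.2) * (starRingEnd ℂ) (gabor f p.1 p.2) =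
      spectrogramExt f (evalPoint p u) * Complex.exp (evalExponent p u) := by
  have harg1 : ((p.1 + u.1 : ℝ) : ℂ) - Complex.I * ((p.2 + u.2 : ℝ) : ℂ) =
      (evalPoint p u).1 - Complex.I * (evalPoint p u).2 := by
    simp only [evalPoint]
    push_cast
    linear_combination ((u.1 : ℂ) / 2) * Complex.I_sq
  have harg2 : ((p.1 : ℝ) : ℂ) - Complex.I * ((p.2 : ℝ) : ℂ) =
      (starRingEnd ℂ) ((evalPoint p u).1 + Complex.I * (evalPoint p u).2) := by
    have h : (evalPoint p u).1 + Complex.I * (evalPoint p u).2 =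
        ((p.1 : ℝ) : ℂ) + Complex.I * ((p.2 : ℝ) : ℂ) := by
      simp only [evalPoint]
      linear_combination ((u.1 : ℂ) / 2) * Complex.I_sq
    rw [h, map_add, map_mul, Complex.conj_I, Complex.conj_ofReal, Complex.conj_ofReal]
    ring
  have hconj : (starRingEnd ℂ) (Complex.exp (-(π : ℂ) * Complex.I * (p.1 : ℂ) * (p.2 : ℂ)
        - (π : ℂ) / 2 * ((p.1 : ℂ) ^ 2 + (p.2 : ℂ) ^ 2))) =
      Complex.exp ((π : ℂ) * Complex.I * (p.1 : ℂ) * (p.2 : ℂ)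
        - (π : ℂ) / 2 * ((p.1 : ℂ) ^ 2 + (p.2 : ℂ) ^ 2)) := by
    rw [← Complex.exp_conj]
    congr 1
    simp only [map_sub, map_neg, map_mul, map_div₀, map_add, map_pow, Complex.conj_I,
      Complex.conj_ofReal, map_ofNat]
    ring
  rw [gabor_eq_bargmann, gabor_eq_bargmann, map_mul, hconj, harg1, harg2, spectrogramExt]
  have hexp : Complex.exp (-(π : ℂ) * Complex.I * ((p.1 + u.1 : ℝ) : ℂ) * ((p.2 + u.2 : ℝ) : ℂ)
        - (π : ℂ) / 2 * (((p.1 + u.1 : ℝ) : ℂ) ^ 2 + ((p.2 + u.2 : ℝ) : ℂ) ^ 2)) *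
      Complex.exp ((π : ℂ) * Complex.I * (p.1 : ℂ) * (p.2 : ℂ)
        - (π : ℂ) / 2 * ((p.1 : ℂ) ^ 2 + (p.2 : ℂ) ^ 2)) =
      Complex.exp (-(π : ℂ) * ((evalPoint p u).1 ^ 2 + (evalPoint p u).2 ^ 2)) *
      Complex.exp (evalExponent p u) := by
    rw [← Complex.exp_add, ← Complex.exp_add]
    congr 1
    simp only [evalPoint, evalExponent]
    push_cast
    linear_combination ((π : ℂ) * ((u.1 : ℂ) ^ 2 + (u.2 : ℂ) ^ 2) / 4) * Complex.I_sq
  rw [mul_mul_mul_comm, hexp]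
  ring
end

section
/- Let s > 0 and g(x) = e^{-2πx²}. Then the family (T_{sℓ}g)_{ℓ∈ℤ} of translates is a Bessel sequence in L²(ℝ) with Bessel bound θ₃(0, e^{-πs²})/2, i.e. Σ_{ℓ∈ℤ} |⟨f, T_{sℓ}g⟩|² ≤ (θ₃(0, e^{-πs²})/2)‖f‖²_{L²} for all f ∈ L²(ℝ). -/
open Real MeasureTheory Finset
open scoped ComplexInnerProductSpace ENNReal NNReal

noncomputable def gg (a : ℝ) : ℝ → ℂ := fun t => ((Real.exp (-2 * π * (t - a) ^ 2) : ℝ) : ℂ)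

lemma gg_memℒp (a : ℝ) : MemLp (gg a) 2 volume := by
  have hm : AEStronglyMeasurable (gg a) volume := by
    apply Continuous.aestronglyMeasurable
    unfold gg; fun_prop
  rw [memLp_two_iff_integrable_sq_norm hm]
  have h1 : Integrable (fun t : ℝ => Real.exp (-(4*π) * (t - a)^2)) volume :=
    (integrable_exp_neg_mul_sq (by positivity)).comp_sub_right a
  refine h1.congr (Filter.Eventually.of_forall fun t => ?_)
  have hn : ‖gg a t‖ = Real.exp (-2 * π * (t - a) ^ 2) := by
    rw [show gg a t = ((Real.exp (-2 * π * (t - a) ^ 2) : ℝ) : ℂ) from rfl,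
      Complex.norm_real, Real.norm_eq_abs, Real.abs_exp]
  dsimp only
  rw [hn, ← Real.exp_nat_mul]
  congr 1; push_cast; ring

lemma gg_integral_mul (a b : ℝ) :
    ∫ t : ℝ, Real.exp (-2*π*(t-a)^2) * Real.exp (-2*π*(t-b)^2)
      = Real.exp (-π*(a-b)^2) / 2 := by
  have key : ∀ t : ℝ, Real.exp (-2*π*(t-a)^2) * Real.exp (-2*π*(t-b)^2)
      = Real.exp (-π*(a-b)^2) * Real.exp (-(4*π) * (t - (a+b)/2)^2) := fun t => by
    rw [← Real.exp_add, ← Real.exp_add]; congr 1; ring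
  simp_rw [key]
  rw [integral_const_mul]
  have h2 : ∫ t : ℝ, Real.exp (-(4*π) * (t - (a+b)/2)^2) = ∫ t : ℝ, Real.exp (-(4*π) * t^2) :=
    integral_sub_right_eq_self (fun t => Real.exp (-(4*π) * t^2)) ((a+b)/2)
  rw [h2, integral_gaussian]
  have h3 : π / (4*π) = (1/2 : ℝ)^2 := by
    have := pi_ne_zero; field_simp; ring
  rw [h3, Real.sqrt_sq (by norm_num)]
  ring

lemma theta_summable {c : ℝ} (hc : 0 < c) : Summable fun k : ℤ => Real.exp (-c * (k:ℝ)^2) := by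
  have hnat : Summable fun n : ℕ => Real.exp (-c * (n:ℝ)^2) := by
    refine Summable.of_nonneg_of_le (fun n => (Real.exp_pos _).le) (fun n => ?_)
      (summable_geometric_of_lt_one (Real.exp_pos (-c)).le (Real.exp_lt_one_iff.mpr (by linarith)))
    rw [← Real.exp_nat_mul]
    apply Real.exp_le_exp.mpr
    have h1 : (n:ℝ) ≤ (n:ℝ)^2 := by
      exact_mod_cast Nat.le_self_pow two_ne_zero n
    nlinarith
  refine Summable.of_nat_of_neg ?_ ?_
  · exact hnat
  · simpa using hnat

lemma memℒp_conj {f : ℝ → ℂ} (hf : MemLp f 2 volume) :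
    MemLp (fun t => (starRingEnd ℂ) (f t)) 2 volume := by
  refine hf.of_le_mul (c := 1)
    (RCLike.continuous_conj.comp_aestronglyMeasurable hf.1)
    (Filter.Eventually.of_forall fun x => ?_)
  simp

lemma integral_sq_norm_eq (φ : ℝ → ℂ) (hφ : MemLp φ 2 volume) :
    ‖hφ.toLp φ‖ = Real.sqrt (∫ t : ℝ, ‖φ t‖^2) := by
  have h1 : ‖hφ.toLp φ‖^2 = RCLike.re (⟪hφ.toLp φ, hφ.toLp φ⟫ : ℂ) :=
    (inner_self_eq_norm_sq _).symm
  rw [L2.inner_def, ← integral_re (L2.integrable_inner _ _)] at h1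
  have h2 : (∫ t : ℝ, RCLike.re (⟪(hφ.toLp φ : ℝ →₂[volume] ℂ) t, (hφ.toLp φ : ℝ →₂[volume] ℂ) t⟫ : ℂ)) = ∫ t : ℝ, ‖φ t‖^2 := by
    refine integral_congr_ae ?_
    filter_upwards [hφ.coeFn_toLp] with t ht
    rw [inner_self_eq_norm_sq, ht]
  rw [h2] at h1
  rw [← h1, Real.sqrt_sq (norm_nonneg _)]

lemma integral_mul_le_cs {f h : ℝ → ℂ} (hf : MemLp f 2 volume) (hh : MemLp h 2 volume) :
    ‖∫ t : ℝ, f t * h t‖ ≤ Real.sqrt (∫ t : ℝ, ‖f t‖^2) * Real.sqrt (∫ t : ℝ, ‖h t‖^2) := by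
  set f' : ℝ → ℂ := fun t => (starRingEnd ℂ) (f t) with hf'def
  have hf' : MemLp f' 2 volume := memℒp_conj hf
  have hFH : (⟪hf'.toLp f', hh.toLp h⟫) = ∫ t : ℝ, f t * h t := by
    rw [L2.inner_def]
    refine integral_congr_ae ?_
    filter_upwards [hf'.coeFn_toLp, hh.coeFn_toLp] with t h1 h2
    rw [h1, h2, RCLike.inner_apply, hf'def]
    simp; ring
  have hcs := norm_inner_le_norm (𝕜 := ℂ) (hf'.toLp f') (hh.toLp h)
  rw [hFH, integral_sq_norm_eq f' hf', integral_sq_norm_eq h hh] at hcs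
  have : (∫ t : ℝ, ‖f' t‖^2) = ∫ t : ℝ, ‖f t‖^2 := by
    refine integral_congr_ae (Filter.Eventually.of_forall fun t => ?_)
    simp [hf'def]
  rwa [this] at hcs

lemma integral_ofReal'' (f : ℝ → ℝ) : ∫ x : ℝ, ((f x : ℝ) : ℂ) = ((∫ x : ℝ, f x : ℝ) : ℂ) :=
  integral_ofReal

lemma memℒp_smul_one_half {f g : ℝ → ℂ} (hf : MemLp f 2 volume) (hg : MemLp g 2 volume) :
    Integrable (fun t => f t * g t) volume := by
  have h111 : (1 : ℝ≥0∞)/1 = 1/2 + 1/2 := by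
    rw [div_one, ENNReal.add_halves]
  have h1 : MemLp (f • g) 1 volume := hg.smul hf
  rw [memLp_one_iff_integrable] at h1
  exact h1.congr (Filter.Eventually.of_forall fun t => by simp [smul_eq_mul])

lemma hgram (a b : ℝ) : ∫ t : ℝ, gg a t * gg b t = ((Real.exp (-π*(a-b)^2)/2 : ℝ) : ℂ) := by
  have h0 : (fun t : ℝ => gg a t * gg b t)
      = fun t : ℝ => ((Real.exp (-2*π*(t-a)^2) * Real.exp (-2*π*(t-b)^2) : ℝ) : ℂ) := by
    funext t; rw [show gg a t = ((Real.exp (-2 * π * (t - a) ^ 2) : ℝ) : ℂ) from rfl,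
      show gg b t = ((Real.exp (-2 * π * (t - b) ^ 2) : ℝ) : ℂ) from rfl]
    push_cast; ring_nf
  rw [h0, integral_ofReal'' , gg_integral_mul]

/-- The translates `(T_{sℓ}g)_{ℓ∈ℤ}` of the Gaussian `g(x) = e^{-2πx²}` form a
Bessel sequence in `L²(ℝ)` with Bessel bound `θ₃(0, e^{-πs²})/2`, i.e.
`Σ_{ℓ∈ℤ} |⟨f, T_{sℓ}g⟩|² ≤ (θ₃(0, e^{-πs²})/2)‖f‖²_{L²}` for all `f ∈ L²(ℝ)`,
where `θ₃(0,q) = Σ_{k∈ℤ} q^{k²}`. -/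
theorem gaussian_translates_bessel (s : ℝ) (hs : 0 < s) (f : ℝ → ℂ)
    (hf : MemLp f 2 volume) :
    ∑' ℓ : ℤ, ‖∫ t : ℝ, f t * ((Real.exp (-2 * π * (t - s * (ℓ : ℝ)) ^ 2) : ℝ) : ℂ)‖ ^ 2 ≤
      ((∑' k : ℤ, Real.exp (-π * s ^ 2 * (k : ℝ) ^ 2)) / 2) * ∫ t : ℝ, ‖f t‖ ^ 2 := by
  set B : ℝ := (∑' k : ℤ, Real.exp (-π * s ^ 2 * (k : ℝ) ^ 2)) / 2 with hB
  set If : ℝ := ∫ t : ℝ, ‖f t‖ ^ 2 with hIf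
  have hIfnn : 0 ≤ If := integral_nonneg fun t => by positivity
  set c : ℤ → ℂ := fun ℓ => ∫ t : ℝ, f t * gg (s * (ℓ:ℝ)) t with hc
  have hgoal : ∀ ℓ : ℤ, (∫ t : ℝ, f t * ((Real.exp (-2 * π * (t - s * (ℓ:ℝ)) ^ 2) : ℝ) : ℂ)) = c ℓ :=
    fun ℓ => rfl
  simp only [hgoal]
  -- summability of the theta series
  have hsum : Summable (fun k : ℤ => Real.exp (-π * s^2 * (k:ℝ)^2)) :=
    (theta_summable (c := π * s^2) (by positivity)).congr (fun k => by norm_num [neg_mul])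
  have hBnn : 0 ≤ B := by
    rw [hB]
    have h0 : 0 ≤ ∑' k : ℤ, Real.exp (-π * s ^ 2 * (k : ℝ) ^ 2) :=
      tsum_nonneg fun k => (Real.exp_pos _).le
    linarith
  set F : ℤ → ℝ := fun m => Real.exp (-π * s^2 * (m:ℝ)^2) / 2 with hFdef
  have hFnn : ∀ m, 0 ≤ F m := fun m => by simp only [hFdef]; positivity
  have hFsum : Summable F := hsum.div_const 2
  set G : ℤ → ℤ → ℝ := fun k ℓ => Real.exp (-π * (s*(k:ℝ) - s*(ℓ:ℝ))^2) / 2 with hG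
  have hGnn : ∀ k ℓ, 0 ≤ G k ℓ := fun k ℓ => by simp only [hG]; positivity
  have hGsymm : ∀ k ℓ, G k ℓ = G ℓ k := fun k ℓ => by
    simp only [hG]
    rw [show (s*(k:ℝ) - s*(ℓ:ℝ))^2 = (s*(ℓ:ℝ) - s*(k:ℝ))^2 by ring]
  have hGF : ∀ k ℓ, G k ℓ = F (k - ℓ) := fun k ℓ => by
    simp only [hG, hFdef]
    rw [show -π * (s*(k:ℝ) - s*(ℓ:ℝ))^2 = -π * s^2 * (((k - ℓ : ℤ)):ℝ)^2 by push_cast; ring]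
  have hrow : ∀ (k : ℤ) (u : Finset ℤ), ∑ ℓ ∈ u, G k ℓ ≤ B := by
    intro k u
    calc ∑ ℓ ∈ u, G k ℓ = ∑ ℓ ∈ u, F (k - ℓ) := Finset.sum_congr rfl fun ℓ _ => hGF k ℓ
      _ ≤ ∑' ℓ : ℤ, F (k - ℓ) := by
          have h7 : Summable fun ℓ : ℤ => F (k - ℓ) := by
            have := (Equiv.summable_iff (Equiv.subLeft k) (f := F)).mpr hFsum
            simpa [Function.comp_def, Equiv.subLeft] using this
          exact Summable.sum_le_tsum u (fun ℓ _ => hFnn _) h7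
      _ = ∑' m : ℤ, F m := by
          have := Equiv.tsum_eq (Equiv.subLeft k) F
          simpa [Equiv.subLeft] using this
      _ = B := by rw [hB, hFdef]; exact tsum_div_const
  -- integrability facts
  have hint : ∀ a : ℝ, Integrable (fun t => f t * gg a t) volume :=
    fun a => memℒp_smul_one_half hf (gg_memℒp a)
  have hint2 : ∀ a b : ℝ, Integrable (fun t => gg a t * gg b t) volume :=
    fun a b => memℒp_smul_one_half (gg_memℒp a) (gg_memℒp b)
  -- the key finite bound
  have key : ∀ u : Finset ℤ, ∑ ℓ ∈ u, ‖c ℓ‖^2 ≤ B * If := by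
    intro u
    set P : ℝ := ∑ ℓ ∈ u, ‖c ℓ‖^2 with hP
    have hPnn : 0 ≤ P := Finset.sum_nonneg fun ℓ _ => by positivity
    set h : ℝ → ℂ := fun t => ∑ ℓ ∈ u, (starRingEnd ℂ) (c ℓ) * gg (s*(ℓ:ℝ)) t with hhdef
    have hhmem : MemLp h 2 volume := by
      apply memLp_finset_sum
      intro ℓ _
      exact (gg_memℒp (s*(ℓ:ℝ))).const_mul _
    have hexp : (fun t => f t * h t)
        = fun t => ∑ ℓ ∈ u, (starRingEnd ℂ) (c ℓ) * (f t * gg (s*(ℓ:ℝ)) t) := by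
      funext t; simp only [hhdef]; rw [Finset.mul_sum]
      exact Finset.sum_congr rfl fun ℓ _ => by ring
    have h1 : ∫ t : ℝ, f t * h t = ∑ ℓ ∈ u, (starRingEnd ℂ) (c ℓ) * c ℓ := by
      rw [hexp, integral_finset_sum u (fun ℓ _ => ((hint (s*(ℓ:ℝ))).const_mul _))]
      exact Finset.sum_congr rfl fun ℓ _ => by rw [integral_const_mul]
    have h2 : ((P : ℝ) : ℂ) = ∫ t : ℝ, f t * h t := by
      rw [h1, hP]; push_cast
      exact Finset.sum_congr rfl fun ℓ _ => by rw [RCLike.conj_mul]; norm_cast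
    have hPle : P ≤ Real.sqrt If * Real.sqrt (∫ t : ℝ, ‖h t‖^2) := by
      calc P = ‖((P:ℝ) : ℂ)‖ := by
              rw [Complex.norm_real, Real.norm_eq_abs, abs_of_nonneg hPnn]
        _ = ‖∫ t : ℝ, f t * h t‖ := by rw [h2]
        _ ≤ _ := integral_mul_le_cs hf hhmem
    -- expansion of the norm of h
    have hpt : ∀ t : ℝ, ((‖h t‖^2 : ℝ) : ℂ)
        = ∑ k ∈ u, ∑ ℓ ∈ u, c k * (starRingEnd ℂ) (c ℓ) * (gg (s*(k:ℝ)) t * gg (s*(ℓ:ℝ)) t) := by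
      intro t
      have e1 : ((‖h t‖^2 : ℝ) : ℂ) = (starRingEnd ℂ) (h t) * h t := by
        rw [RCLike.conj_mul]; norm_cast
      rw [e1]
      simp only [hhdef, map_sum, map_mul]
      rw [Finset.sum_mul_sum]
      refine Finset.sum_congr rfl fun k _ => Finset.sum_congr rfl fun ℓ _ => ?_
      rw [Complex.conj_conj, show (starRingEnd ℂ) (gg (s*(k:ℝ)) t) = gg (s*(k:ℝ)) t from
        Complex.conj_ofReal _]
      ring
    have hNc : ((∫ t : ℝ, ‖h t‖^2 : ℝ) : ℂ)
        = ∑ k ∈ u, ∑ ℓ ∈ u, c k * (starRingEnd ℂ) (c ℓ) * ((G k ℓ : ℝ) : ℂ) := by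
      rw [← integral_ofReal'' (fun t => ‖h t‖^2)]
      simp_rw [hpt]
      rw [integral_finset_sum u (fun k _ => integrable_finset_sum u
        (fun ℓ _ => ((hint2 _ _).const_mul _)))]
      refine Finset.sum_congr rfl fun k _ => ?_
      rw [integral_finset_sum u (fun ℓ _ => ((hint2 _ _).const_mul _))]
      refine Finset.sum_congr rfl fun ℓ _ => ?_
      rw [integral_const_mul, hgram]
    have hNnn : 0 ≤ ∫ t : ℝ, ‖h t‖^2 := integral_nonneg fun t => by positivity
    have hNle : ∫ t : ℝ, ‖h t‖^2 ≤ ∑ k ∈ u, ∑ ℓ ∈ u, ‖c k‖ * ‖c ℓ‖ * G k ℓ := by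
      calc ∫ t : ℝ, ‖h t‖^2 = ‖((∫ t : ℝ, ‖h t‖^2 : ℝ) : ℂ)‖ := by
            rw [Complex.norm_real, Real.norm_eq_abs, abs_of_nonneg hNnn]
        _ = ‖∑ k ∈ u, ∑ ℓ ∈ u, c k * (starRingEnd ℂ) (c ℓ) * ((G k ℓ : ℝ) : ℂ)‖ := by rw [hNc]
        _ ≤ ∑ k ∈ u, ‖∑ ℓ ∈ u, c k * (starRingEnd ℂ) (c ℓ) * ((G k ℓ : ℝ) : ℂ)‖ :=
            norm_sum_le _ _
        _ ≤ ∑ k ∈ u, ∑ ℓ ∈ u, ‖c k * (starRingEnd ℂ) (c ℓ) * ((G k ℓ : ℝ) : ℂ)‖ :=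
            Finset.sum_le_sum fun k _ => norm_sum_le _ _
        _ = ∑ k ∈ u, ∑ ℓ ∈ u, ‖c k‖ * ‖c ℓ‖ * G k ℓ := by
            refine Finset.sum_congr rfl fun k _ => Finset.sum_congr rfl fun ℓ _ => ?_
            rw [norm_mul, norm_mul, RCLike.norm_conj, Complex.norm_real, Real.norm_eq_abs,
              abs_of_nonneg (hGnn k ℓ)]
    have hschur : ∑ k ∈ u, ∑ ℓ ∈ u, ‖c k‖ * ‖c ℓ‖ * G k ℓ ≤ B * P := by
      have step1 : ∑ k ∈ u, ∑ ℓ ∈ u, ‖c k‖ * ‖c ℓ‖ * G k ℓ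
          ≤ ∑ k ∈ u, ∑ ℓ ∈ u, (‖c k‖^2/2 * G k ℓ + ‖c ℓ‖^2/2 * G k ℓ) := by
        refine Finset.sum_le_sum fun k _ => Finset.sum_le_sum fun ℓ _ => ?_
        nlinarith [sq_nonneg (‖c k‖ - ‖c ℓ‖), hGnn k ℓ]
      have hsw : ∑ k ∈ u, ∑ ℓ ∈ u, ‖c ℓ‖^2/2 * G k ℓ
          = ∑ k ∈ u, ∑ ℓ ∈ u, ‖c k‖^2/2 * G k ℓ := by
        rw [Finset.sum_comm]
        exact Finset.sum_congr rfl fun k _ => Finset.sum_congr rfl fun ℓ _ => by rw [hGsymm ℓ k]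
      have step2 : ∑ k ∈ u, ∑ ℓ ∈ u, (‖c k‖^2/2 * G k ℓ + ‖c ℓ‖^2/2 * G k ℓ)
          = ∑ k ∈ u, ∑ ℓ ∈ u, ‖c k‖^2 * G k ℓ := by
        simp_rw [Finset.sum_add_distrib]
        rw [hsw, ← Finset.sum_add_distrib]
        refine Finset.sum_congr rfl fun k _ => ?_
        rw [← Finset.sum_add_distrib]
        exact Finset.sum_congr rfl fun ℓ _ => by ring
      have step3 : ∑ k ∈ u, ∑ ℓ ∈ u, ‖c k‖^2 * G k ℓ ≤ B * P := by
        calc ∑ k ∈ u, ∑ ℓ ∈ u, ‖c k‖^2 * G k ℓ = ∑ k ∈ u, ‖c k‖^2 * ∑ ℓ ∈ u, G k ℓ := by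
              exact Finset.sum_congr rfl fun k _ => (Finset.mul_sum _ _ _).symm
          _ ≤ ∑ k ∈ u, ‖c k‖^2 * B := Finset.sum_le_sum fun k _ =>
              mul_le_mul_of_nonneg_left (hrow k u) (by positivity)
          _ = B * P := by rw [hP, Finset.mul_sum]; exact Finset.sum_congr rfl fun k _ => by ring
      linarith
    have hNB : ∫ t : ℝ, ‖h t‖^2 ≤ B * P := le_trans hNle hschur
    have h4 : P ≤ Real.sqrt If * Real.sqrt (B * P) := by
      refine le_trans hPle ?_
      exact mul_le_mul_of_nonneg_left (Real.sqrt_le_sqrt hNB) (Real.sqrt_nonneg _)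
    have hsq : P * P ≤ (B * If) * P := by
      have h5 := mul_self_le_mul_self hPnn h4
      have h6 : (Real.sqrt If * Real.sqrt (B * P)) * (Real.sqrt If * Real.sqrt (B * P))
          = If * (B * P) := by
        rw [mul_mul_mul_comm, Real.mul_self_sqrt hIfnn,
          Real.mul_self_sqrt (mul_nonneg hBnn hPnn)]
      rw [h6] at h5
      nlinarith
    rcases eq_or_lt_of_le hPnn with h0 | h0
    · rw [← h0]; positivity
    · exact le_of_mul_le_mul_right hsq h0
  have hsummable : Summable (fun ℓ : ℤ => ‖c ℓ‖^2) :=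
    summable_of_sum_le (fun ℓ => by positivity) key
  exact Summable.tsum_le_of_sum_le hsummable key
end
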